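/- Let A be an m×m matrix with real entries and let ξ_1, …, ξ_m be the roots in ℂ of its characteristic polynomial, counted with multiplicity. For every real δ with 0 < δ < π/2 and every N ∈ ℕ, there exists an integer n ≥ N such that tr(A^n) ≥ cos(δ) · (|ξ_1|^n + ⋯ + |ξ_m|^n). -/

import Mathlib

open Polynomial Matrix

lemma eval_charpoly' {m : ℕ} (B : Matrix (Fin m) (Fin m) ℂ) (r : ℂ) :
    B.charpoly.eval r = ((Matrix.scalar (Fin m) r) - B).det := by
  rw [Matrix.charpoly, _root_.eval_det, matPolyEquiv_charmatrix]
  simp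

lemma prod_map_fin_prod {ι : Type*} (s : Multiset ℂ) (t : Finset ι) (f : ℂ → ι → ℂ) :
    (s.map (fun r => ∏ j ∈ t, f r j)).prod = ∏ j ∈ t, (s.map (fun r => f r j)).prod := by
  induction s using Multiset.induction with
  | empty => simp
  | cons a s ih => simp [ih, Finset.prod_mul_distrib]

lemma charpoly_pow_eq {m : ℕ} (B : Matrix (Fin m) (Fin m) ℂ) (ξ : Fin m → ℂ)
    (hξ : B.charpoly.roots = Multiset.map ξ Finset.univ.val) (n : ℕ) (hn : n ≠ 0) :
    (B ^ n).charpoly = ∏ j : Fin m, (X - C (ξ j ^ n)) := by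
  have hscal : ∀ r : ℂ, (Matrix.scalar (Fin m)) r = algebraMap ℂ (Matrix (Fin m) (Fin m) ℂ) r := by
    intro r; simp [Matrix.algebraMap_eq_diagonal, Matrix.scalar]
  have hchar : B.charpoly = ∏ j : Fin m, (X - C (ξ j)) := by
    conv_lhs => rw [(IsAlgClosed.splits B.charpoly).eq_prod_roots_of_monic B.charpoly_monic]
    rw [hξ, Multiset.map_map, Finset.prod_eq_multiset_prod]
    rfl
  have hcharev : ∀ r : ℂ, ((Matrix.scalar (Fin m) r) - B).det = ∏ j : Fin m, (r - ξ j) := by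
    intro r
    rw [← eval_charpoly', hchar]
    simp [eval_prod]
  apply Polynomial.funext
  intro x
  rw [eval_charpoly', eval_prod]
  simp only [eval_sub, eval_X, eval_C]
  set p : ℂ[X] := X ^ n - C x with hpdef
  have hmon : p.Monic := monic_X_pow_sub_C x hn
  set s : Multiset ℂ := p.roots with hsdef
  have hcard : Multiset.card s = n := by
    rw [hsdef, (splits_iff_card_roots).mp (IsAlgClosed.splits p),
      hpdef, natDegree_X_pow_sub_C]
  have hp : p = (s.map fun a => X - C a).prod :=
    (IsAlgClosed.splits p).eq_prod_roots_of_monic hmon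
  have heval : ∀ t : ℂ, t ^ n - x = (s.map fun a => t - a).prod := by
    intro t
    have := congrArg (eval t) hp
    simpa [hpdef, eval_multiset_prod, Multiset.map_map, Function.comp] using this
  set l : List ℂ := s.toList with hldef
  have hsl : (l : Multiset ℂ) = s := Multiset.coe_toList s
  have hmat : B ^ n - algebraMap ℂ _ x = (l.map fun a => B - algebraMap ℂ _ a).prod := by
    have h1 := congrArg (aeval B) hp
    have h2 : (s.map fun a => X - C a).prod = ((l.map fun a => X - C a) : List ℂ[X]).prod := by
      rw [← hsl, Multiset.map_coe, Multiset.prod_coe]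
    rw [h2] at h1
    rw [map_list_prod (aeval B : ℂ[X] →ₐ[ℂ] Matrix (Fin m) (Fin m) ℂ)] at h1
    simpa [hpdef, List.map_map, Function.comp_def, aeval_X, aeval_C] using h1
  have hinner : ∀ a : ℂ, (B - algebraMap ℂ (Matrix (Fin m) (Fin m) ℂ) a).det
      = (-1 : ℂ) ^ m * ∏ j : Fin m, (a - ξ j) := by
    intro a
    rw [show B - algebraMap ℂ (Matrix (Fin m) (Fin m) ℂ) a
        = -((Matrix.scalar (Fin m)) a - B) by rw [neg_sub, hscal], Matrix.det_neg, hcharev a]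
    simp
  have hj : ∀ j : Fin m, (s.map fun a => a - ξ j).prod = (-1 : ℂ) ^ n * (ξ j ^ n - x) := by
    intro j
    have h1 : (s.map fun a => a - ξ j) = (s.map fun a => ξ j - a).map Neg.neg := by
      simp [Multiset.map_map, neg_sub]
    rw [h1, Multiset.prod_map_neg, ← heval (ξ j)]
    simp [hcard]
  have step : ((Matrix.scalar (Fin m)) x - B ^ n).det
      = (-1:ℂ)^m * (((-1:ℂ)^m)^n * (s.map fun a => ∏ j : Fin m, (a - ξ j)).prod) := by
    rw [show (Matrix.scalar (Fin m)) x - B ^ n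
        = -(B ^ n - algebraMap ℂ (Matrix (Fin m) (Fin m) ℂ) x) by rw [neg_sub, hscal],
      Matrix.det_neg, hmat]
    have hdetprod : (((l.map fun a => B - algebraMap ℂ (Matrix (Fin m) (Fin m) ℂ) a)).prod).det
        = ((l.map fun a => (B - algebraMap ℂ (Matrix (Fin m) (Fin m) ℂ) a).det)).prod := by
      have := map_list_prod (Matrix.detMonoidHom (n := Fin m) (R := ℂ))
        (l.map fun a => B - algebraMap ℂ (Matrix (Fin m) (Fin m) ℂ) a)
      simpa [Matrix.coe_detMonoidHom, List.map_map, Function.comp_def] using this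
    rw [hdetprod]
    have hls : ((l.map fun a => (B - algebraMap ℂ (Matrix (Fin m) (Fin m) ℂ) a).det)).prod
        = (s.map fun a => (B - algebraMap ℂ (Matrix (Fin m) (Fin m) ℂ) a).det).prod := by
      rw [← hsl, Multiset.map_coe, Multiset.prod_coe]
    rw [hls]
    have : (s.map fun a => (B - algebraMap ℂ (Matrix (Fin m) (Fin m) ℂ) a).det)
        = (s.map fun a => (-1:ℂ)^m * ∏ j : Fin m, (a - ξ j)) := by
      exact Multiset.map_congr rfl fun a _ => hinner a
    rw [this]
    simp [Multiset.prod_map_mul, hcard]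
  rw [step, prod_map_fin_prod]
  have hneg : ∏ j : Fin m, (ξ j ^ n - x) = (-1:ℂ)^m * ∏ j : Fin m, (x - ξ j ^ n) := by
    calc ∏ j : Fin m, (ξ j ^ n - x) = ∏ j : Fin m, ((-1) * (x - ξ j ^ n)) := by
          exact Finset.prod_congr rfl fun j _ => by ring
      _ = (-1:ℂ)^m * ∏ j : Fin m, (x - ξ j ^ n) := by
          rw [Finset.prod_mul_distrib, Finset.prod_const, Finset.card_univ, Fintype.card_fin]
  have h5 : ∏ j : Fin m, (s.map fun a => a - ξ j).prod
      = ((-1:ℂ)^n)^m * ((-1:ℂ)^m * ∏ j : Fin m, (x - ξ j ^ n)) := by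
    calc ∏ j : Fin m, (s.map fun a => a - ξ j).prod
        = ∏ j : Fin m, ((-1:ℂ)^n * (ξ j ^ n - x)) := Finset.prod_congr rfl fun j _ => hj j
      _ = ((-1:ℂ)^n)^m * ∏ j : Fin m, (ξ j ^ n - x) := by
          rw [Finset.prod_mul_distrib, Finset.prod_const, Finset.card_univ, Fintype.card_fin]
      _ = ((-1:ℂ)^n)^m * ((-1:ℂ)^m * ∏ j : Fin m, (x - ξ j ^ n)) := by rw [hneg]
  rw [h5, ← pow_mul, ← pow_mul]
  have hone : (-1:ℂ)^m * (-1:ℂ)^(m*n) * (-1:ℂ)^(n*m) * (-1:ℂ)^m = 1 := by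
    rw [← pow_add, ← pow_add, ← pow_add]
    have h2 : m + m*n + n*m + m = 2*(m + m*n) := by ring
    rw [h2, pow_mul]; norm_num
  calc (-1:ℂ)^m * ((-1:ℂ)^(m*n) * ((-1:ℂ)^(n*m) * ((-1:ℂ)^m * ∏ j : Fin m, (x - ξ j ^ n))))
      = ((-1:ℂ)^m * (-1:ℂ)^(m*n) * (-1:ℂ)^(n*m) * (-1:ℂ)^m) * ∏ j : Fin m, (x - ξ j ^ n) := by
        ring
    _ = ∏ j : Fin m, (x - ξ j ^ n) := by rw [hone, one_mul]

lemma trace_pow_eq_sum' {m : ℕ} (A : Matrix (Fin m) (Fin m) ℝ) (ξ : Fin m → ℂ)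
    (hξ : (A.charpoly.map (algebraMap ℝ ℂ)).roots = Multiset.map ξ Finset.univ.val)
    (n : ℕ) (hn : n ≠ 0) :
    ((A ^ n).trace : ℂ) = ∑ j : Fin m, ξ j ^ n := by
  set B : Matrix (Fin m) (Fin m) ℂ := A.map (algebraMap ℝ ℂ) with hB
  have hBroots : B.charpoly.roots = Multiset.map ξ Finset.univ.val := by
    rw [hB, Matrix.charpoly_map]; exact hξ
  have h1 := charpoly_pow_eq B ξ hBroots n hn
  have h2 : (B ^ n).trace = ∑ j : Fin m, ξ j ^ n := by
    rw [trace_eq_sum_roots_charpoly, h1, Finset.prod_eq_multiset_prod]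
    have h3 : (Multiset.map (fun j => X - C (ξ j ^ n)) Finset.univ.val).prod
        = ((Finset.univ.val.map fun j => ξ j ^ n).map fun a => X - C a).prod := by
      rw [Multiset.map_map]; rfl
    rw [h3, roots_multiset_prod_X_sub_C]
    rfl
  have h4 : B ^ n = (A ^ n).map (algebraMap ℝ ℂ) := by
    have := map_pow ((algebraMap ℝ ℂ).mapMatrix) A n
    simpa [RingHom.mapMatrix_apply, hB] using this.symm
  have h5 : (B ^ n).trace = ((A ^ n).trace : ℂ) := by
    rw [h4]
    exact (AddMonoidHom.map_trace (algebraMap ℝ ℂ).toAddMonoidHom (A ^ n)).symm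
  rw [← h5, h2]


lemma re_pow_eq (z : ℂ) (n : ℕ) :
    (z ^ n).re = ‖z‖ ^ n * Real.cos (n * Complex.arg z) := by
  conv_lhs => rw [← Complex.norm_mul_exp_arg_mul_I z]
  rw [mul_pow, ← Complex.exp_nat_mul, ← Complex.ofReal_pow,
    show (n : ℂ) * (Complex.arg z * Complex.I) = (↑(n * Complex.arg z) : ℂ) * Complex.I by
      push_cast; ring,
    Complex.re_ofReal_mul, Complex.exp_ofReal_mul_I_re]

lemma exists_good_n {m : ℕ} (φ : Fin m → ℝ) (M : ℕ) (hM : 0 < M) (c : ℕ) (hc : 0 < c) :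
    ∃ n : ℕ, c ≤ n ∧ ∀ j, ∃ p : ℤ, |(n : ℝ) * φ j - p| < 1 / M := by
  have hbd : ∀ (t : ℝ), (⌊Int.fract t * M⌋).toNat < M := by
    intro t
    have h0 : (0:ℝ) ≤ Int.fract t := Int.fract_nonneg t
    have h1 : Int.fract t < 1 := Int.fract_lt_one t
    have h2 : ⌊Int.fract t * M⌋ < (M : ℤ) := by
      apply Int.floor_lt.mpr
      push_cast
      have hMpos : (0:ℝ) < M := by exact_mod_cast hM
      nlinarith
    omega
  set F : ℕ → (Fin m → Fin M) := fun k j => ⟨(⌊Int.fract ((c : ℝ) * k * φ j) * M⌋).toNat,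
    hbd _⟩ with hF
  obtain ⟨k1, k2, hne, heq⟩ := Finite.exists_ne_map_eq_of_infinite F
  set a := min k1 k2
  set b := max k1 k2
  have hab : a < b := by
    rcases hne.lt_or_gt with h | h
    · simpa [a, b, min_eq_left h.le, max_eq_right h.le] using h
    · simpa [a, b, min_eq_right h.le, max_eq_left h.le] using h
  have hFab : F a = F b := by
    rcases hne.lt_or_gt with h | h
    · simpa [a, b, min_eq_left h.le, max_eq_right h.le] using heq
    · simpa [a, b, min_eq_right h.le, max_eq_left h.le] using heq.symm
  refine ⟨c * (b - a), Nat.le_mul_of_pos_right c (by omega), ?_⟩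
  intro j
  have hfloor : ⌊Int.fract ((c : ℝ) * a * φ j) * M⌋ = ⌊Int.fract ((c : ℝ) * b * φ j) * M⌋ := by
    have := congrArg (fun f => (f j : ℕ)) hFab
    simp only [hF] at this
    have h0a : 0 ≤ ⌊Int.fract ((c : ℝ) * a * φ j) * M⌋ :=
      Int.floor_nonneg.mpr (mul_nonneg (Int.fract_nonneg _) (by positivity))
    have h0b : 0 ≤ ⌊Int.fract ((c : ℝ) * b * φ j) * M⌋ :=
      Int.floor_nonneg.mpr (mul_nonneg (Int.fract_nonneg _) (by positivity))
    omega
  set u := (c : ℝ) * a * φ j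
  set v := (c : ℝ) * b * φ j
  have hMpos : (0:ℝ) < M := Nat.cast_pos.mpr hM
  have hfr : |Int.fract v - Int.fract u| < 1 / M := by
    have l1 := Int.floor_le (Int.fract u * M)
    have l2 := Int.lt_floor_add_one (Int.fract u * M)
    have l3 := Int.floor_le (Int.fract v * M)
    have l4 := Int.lt_floor_add_one (Int.fract v * M)
    rw [hfloor] at l1 l2
    rw [abs_sub_lt_iff]
    constructor
    · rw [lt_div_iff₀ hMpos]; linarith
    · rw [lt_div_iff₀ hMpos]; linarith
  refine ⟨⌊v⌋ - ⌊u⌋, ?_⟩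
  have hnv : ((c * (b - a) : ℕ) : ℝ) * φ j = v - u := by
    push_cast [Nat.cast_sub hab.le]
    ring
  rw [hnv]
  have hu : u - ⌊u⌋ = Int.fract u := (Int.self_sub_floor u)
  have hv : v - ⌊v⌋ = Int.fract v := (Int.self_sub_floor v)
  have : v - u - ((⌊v⌋ : ℝ) - ⌊u⌋) = Int.fract v - Int.fract u := by
    rw [← hu, ← hv]; ring
  rw [show ((⌊v⌋ - ⌊u⌋ : ℤ) : ℝ) = (⌊v⌋ : ℝ) - (⌊u⌋ : ℝ) by push_cast; ring, this]
  exact hfr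

/-- For a real `m × m` matrix `A` whose characteristic polynomial has complex roots
`ξ 1, …, ξ m` counted with multiplicity, for every `0 < δ < π/2` and `N`, there is
`n ≥ N` with `tr (A ^ n) ≥ cos δ * ∑ j, |ξ j| ^ n`. -/
theorem trace_power_lower_bound {m : ℕ} (A : Matrix (Fin m) (Fin m) ℝ) (ξ : Fin m → ℂ)
    (hξ : (A.charpoly.map (algebraMap ℝ ℂ)).roots = Multiset.map ξ Finset.univ.val)
    (δ : ℝ) (hδ0 : 0 < δ) (hδ : δ < Real.pi / 2) (N : ℕ) :
    ∃ n : ℕ, N ≤ n ∧ Real.cos δ * ∑ j : Fin m, ‖ξ j‖ ^ n ≤ (A ^ n).trace := by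
  have hπ : 0 < Real.pi := Real.pi_pos
  set M : ℕ := ⌈2 * Real.pi / δ⌉₊ + 1 with hMdef
  have hM0 : 0 < M := Nat.succ_pos _
  have hMR : (0:ℝ) < M := by exact_mod_cast hM0
  have hMδ : 2 * Real.pi / M ≤ δ := by
    rw [div_le_iff₀ hMR]
    have h1 : 2 * Real.pi / δ ≤ (M : ℝ) := by
      calc 2 * Real.pi / δ ≤ (⌈2 * Real.pi / δ⌉₊ : ℝ) := Nat.le_ceil _
        _ ≤ (M : ℝ) := by exact_mod_cast Nat.le_succ _
    have := (div_le_iff₀ hδ0).mp h1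
    nlinarith
  obtain ⟨n, hnc, hgood⟩ := exists_good_n (fun j => Complex.arg (ξ j) / (2 * Real.pi)) M hM0
    (N + 1) (Nat.succ_pos N)
  refine ⟨n, le_trans (Nat.le_succ N) hnc, ?_⟩
  have hn0 : n ≠ 0 := by omega
  have htr := trace_pow_eq_sum' A ξ hξ n hn0
  have htrre : (A ^ n).trace = ∑ j : Fin m, (ξ j ^ n).re := by
    have := congrArg Complex.re htr
    simpa using this
  have hcos : ∀ j, Real.cos δ ≤ Real.cos ((n : ℝ) * Complex.arg (ξ j)) := by
    intro j
    obtain ⟨p, hp⟩ := hgood j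
    have hkey : (n:ℝ) * Complex.arg (ξ j)
        = 2 * Real.pi * ((n:ℝ) * (Complex.arg (ξ j) / (2 * Real.pi)) - p)
          + p * (2 * Real.pi) := by
      field_simp
      ring
    rw [hkey, Real.cos_add_int_mul_two_pi]
    set t := 2 * Real.pi * ((n:ℝ) * (Complex.arg (ξ j) / (2 * Real.pi)) - p) with ht
    have habs : |t| ≤ δ := by
      have h2 : |t| = 2 * Real.pi * |(n:ℝ) * (Complex.arg (ξ j) / (2 * Real.pi)) - p| := by
        rw [ht, abs_mul, abs_of_pos (by linarith)]
      calc |t| ≤ 2 * Real.pi * (1 / M) := by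
            rw [h2]
            exact mul_le_mul_of_nonneg_left hp.le (by linarith)
        _ = 2 * Real.pi / M := by ring
        _ ≤ δ := hMδ
    calc Real.cos δ ≤ Real.cos |t| :=
          Real.cos_le_cos_of_nonneg_of_le_pi (abs_nonneg t) (by linarith) habs
      _ = Real.cos t := Real.cos_abs t
  rw [htrre, Finset.mul_sum]
  refine Finset.sum_le_sum fun j _ => ?_
  rw [re_pow_eq, mul_comm (Real.cos δ)]
  exact mul_le_mul_of_nonneg_left (hcos j) (by positivity)
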